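/- Let Ω be an n×n symmetric positive definite prior precision matrix, H a k×n matrix with ‖H‖ ≤ 1, R symmetric positive definite, and Ĉ = (Ω + HᵀR⁻¹H)⁻¹. Suppose Ω_loc and H_loc satisfy ‖Ω − Ω_loc‖ ≤ δ_Ω and ‖H − H_loc‖ ≤ δ_H, and Δ₂ := δ_Ω + (2δ_H + δ_H²)‖R⁻¹‖ < ‖Ĉ‖⁻¹. Then the localized posterior covariance Ĉ_loc = (Ω_loc + H_locᵀR⁻¹H_loc)⁻¹ satisfies ‖Ĉ − Ĉ_loc‖ ≤ ‖Ĉ‖²Δ₂ / (1 − Δ₂‖Ĉ‖). -/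

import Mathlib

open Matrix
open scoped Matrix.Norms.L2Operator

/-- localization bound for the posterior covariance of a linear–Gaussian
inverse problem, precision-matrix form.  With `Ĉ = (Ω + Hᵀ R⁻¹ H)⁻¹`,
`Ĉ_loc = (Ω_loc + H_locᵀ R⁻¹ H_loc)⁻¹`, `‖Ω - Ω_loc‖ ≤ δ_Ω`, `‖H - H_loc‖ ≤ δ_H`,
`‖H‖ ≤ 1`, and `Δ₂ = δ_Ω + (2δ_H + δ_H²) ‖R⁻¹‖ < ‖Ĉ‖⁻¹`, one has
`‖Ĉ - Ĉ_loc‖ ≤ ‖Ĉ‖² Δ₂ / (1 - Δ₂ ‖Ĉ‖)`. -/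
theorem posterior_covariance_localization_bound_precision
    {n k : ℕ} (Ω Ωloc : Matrix (Fin n) (Fin n) ℝ) (hΩ : Ω.PosDef) (hΩloc : Ωloc.IsHermitian)
    (H Hloc : Matrix (Fin k) (Fin n) ℝ) (R : Matrix (Fin k) (Fin k) ℝ) (hR : R.PosDef)
    (hH : ‖H‖ ≤ 1) (δΩ δH : ℝ)
    (hδΩ : ‖Ω - Ωloc‖ ≤ δΩ) (hδH : ‖H - Hloc‖ ≤ δH)
    (Δ₂ : ℝ) (hΔ₂ : Δ₂ = δΩ + (2 * δH + δH ^ 2) * ‖R⁻¹‖)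
    (hΔ₂small : Δ₂ < ‖(Ω + Hᵀ * R⁻¹ * H)⁻¹‖⁻¹) :
    ‖(Ω + Hᵀ * R⁻¹ * H)⁻¹ - (Ωloc + Hlocᵀ * R⁻¹ * Hloc)⁻¹‖ ≤
      ‖(Ω + Hᵀ * R⁻¹ * H)⁻¹‖ ^ 2 * Δ₂ / (1 - Δ₂ * ‖(Ω + Hᵀ * R⁻¹ * H)⁻¹‖) := by
  set A := Ω + Hᵀ * R⁻¹ * H with hAdef
  set B := Ωloc + Hlocᵀ * R⁻¹ * Hloc with hBdef
  have hδΩ0 : 0 ≤ δΩ := le_trans (norm_nonneg _) hδΩ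
  have hδH0 : 0 ≤ δH := le_trans (norm_nonneg _) hδH
  have hRn : 0 ≤ ‖R⁻¹‖ := norm_nonneg _
  have hΔ₂0 : 0 ≤ Δ₂ := by nlinarith
  rcases Nat.eq_zero_or_pos n with hn | hn
  · exfalso
    subst hn
    have h0 : (A⁻¹ : Matrix (Fin 0) (Fin 0) ℝ) = 0 := Subsingleton.elim _ _
    rw [h0, norm_zero] at hΔ₂small
    simp at hΔ₂small
    linarith
  haveI : Nonempty (Fin n) := ⟨⟨0, hn⟩⟩
  -- A is positive definite, hence invertible
  have hA : A.PosDef := by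
    refine hΩ.add_posSemidef ?_
    rw [← conjTranspose_eq_transpose_of_trivial]
    exact hR.inv.posSemidef.conjTranspose_mul_mul_same H
  have hAdet : IsUnit A.det := (Matrix.isUnit_iff_isUnit_det A).mp hA.isUnit
  have hAmul : A * A⁻¹ = 1 := Matrix.mul_nonsing_inv A hAdet
  have hAmul' : A⁻¹ * A = 1 := Matrix.nonsing_inv_mul A hAdet
  have hAn : 0 < ‖A⁻¹‖ := by
    rcases (norm_nonneg A⁻¹).lt_or_eq with h | h
    · exact h
    · exfalso; rw [← h] at hΔ₂small; simp at hΔ₂small; linarith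
  have hΔA : Δ₂ * ‖A⁻¹‖ < 1 := by
    have := mul_lt_mul_of_pos_right hΔ₂small hAn
    rwa [inv_mul_cancel₀ hAn.ne'] at this
  -- transpose preserves the norm
  have hTn : ∀ (M : Matrix (Fin k) (Fin n) ℝ), ‖Mᵀ‖ = ‖M‖ := fun M => by
    rw [← conjTranspose_eq_transpose_of_trivial]; exact l2_opNorm_conjTranspose M
  -- the perturbation bound
  have hHloc : ‖Hloc‖ ≤ 1 + δH := by
    calc ‖Hloc‖ = ‖H - (H - Hloc)‖ := by rw [sub_sub_cancel]
    _ ≤ ‖H‖ + ‖H - Hloc‖ := norm_sub_le _ _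
    _ ≤ 1 + δH := add_le_add hH hδH
  have hsplit : A - B = (Ω - Ωloc) + (Hᵀ * (R⁻¹ * (H - Hloc)) + (H - Hloc)ᵀ * (R⁻¹ * Hloc)) := by
    rw [hAdef, hBdef]
    simp only [transpose_sub, Matrix.mul_sub, Matrix.sub_mul, Matrix.mul_assoc]
    abel
  have hE : ‖A - B‖ ≤ Δ₂ := by
    rw [hsplit]
    have h1 : ‖Hᵀ * (R⁻¹ * (H - Hloc))‖ ≤ 1 * (‖R⁻¹‖ * δH) := by
      refine le_trans (l2_opNorm_mul _ _) (mul_le_mul ?_ ?_ (norm_nonneg _) zero_le_one)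
      · rw [hTn]; exact hH
      · exact le_trans (l2_opNorm_mul _ _)
          (mul_le_mul_of_nonneg_left hδH hRn)
    have h2 : ‖(H - Hloc)ᵀ * (R⁻¹ * Hloc)‖ ≤ δH * (‖R⁻¹‖ * (1 + δH)) := by
      refine le_trans (l2_opNorm_mul _ _) (mul_le_mul ?_ ?_ (norm_nonneg _) hδH0)
      · rw [hTn]; exact hδH
      · exact le_trans (l2_opNorm_mul _ _)
          (mul_le_mul_of_nonneg_left hHloc hRn)
    calc ‖(Ω - Ωloc) + (Hᵀ * (R⁻¹ * (H - Hloc)) + (H - Hloc)ᵀ * (R⁻¹ * Hloc))‖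
        ≤ ‖Ω - Ωloc‖ + ‖Hᵀ * (R⁻¹ * (H - Hloc)) + (H - Hloc)ᵀ * (R⁻¹ * Hloc)‖ :=
          norm_add_le _ _
      _ ≤ δΩ + (‖Hᵀ * (R⁻¹ * (H - Hloc))‖ + ‖(H - Hloc)ᵀ * (R⁻¹ * Hloc)‖) :=
          add_le_add hδΩ (norm_add_le _ _)
      _ ≤ δΩ + (1 * (‖R⁻¹‖ * δH) + δH * (‖R⁻¹‖ * (1 + δH))) := by
          exact add_le_add_right (add_le_add h1 h2) _
      _ = Δ₂ := by rw [hΔ₂]; ring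
  -- Neumann series argument
  have ht : ‖A⁻¹ * (A - B)‖ < 1 := by
    calc ‖A⁻¹ * (A - B)‖ ≤ ‖A⁻¹‖ * ‖A - B‖ := norm_mul_le _ _
    _ ≤ ‖A⁻¹‖ * Δ₂ := mul_le_mul_of_nonneg_left hE hAn.le
    _ < 1 := by rw [mul_comm]; exact hΔA
  set u := Units.oneSub (A⁻¹ * (A - B)) ht with hu
  have hB : B = A * u.val := by
    rw [Units.val_oneSub, mul_sub, mul_one, ← mul_assoc, hAmul, one_mul, sub_sub_cancel]
  have hBunit : IsUnit B := hB ▸ (hA.isUnit.mul u.isUnit)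
  have hBdet : IsUnit B.det := (Matrix.isUnit_iff_isUnit_det B).mp hBunit
  have hBmul : B * B⁻¹ = 1 := Matrix.mul_nonsing_inv B hBdet
  have hBinv : B⁻¹ = (↑u⁻¹ : Matrix (Fin n) (Fin n) ℝ) * A⁻¹ := by
    rw [hB, Matrix.mul_inv_rev, Matrix.coe_units_inv]
  have huinv : ‖(↑u⁻¹ : Matrix (Fin n) (Fin n) ℝ)‖ ≤ (1 - ‖A⁻¹ * (A - B)‖)⁻¹ := by
    have h1 : (↑u⁻¹ : Matrix (Fin n) (Fin n) ℝ) = ∑' i : ℕ, (A⁻¹ * (A - B)) ^ i := rfl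
    rw [h1]
    have := tsum_geometric_le_of_norm_lt_one (A⁻¹ * (A - B)) ht
    rwa [CStarRing.norm_one, sub_self, zero_add] at this
  have h1t : 0 < 1 - Δ₂ * ‖A⁻¹‖ := by linarith
  have hstep : 1 - Δ₂ * ‖A⁻¹‖ ≤ 1 - ‖A⁻¹ * (A - B)‖ := by
    have : ‖A⁻¹ * (A - B)‖ ≤ Δ₂ * ‖A⁻¹‖ := by
      calc ‖A⁻¹ * (A - B)‖ ≤ ‖A⁻¹‖ * ‖A - B‖ := norm_mul_le _ _
      _ ≤ ‖A⁻¹‖ * Δ₂ := mul_le_mul_of_nonneg_left hE hAn.le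
      _ = Δ₂ * ‖A⁻¹‖ := mul_comm _ _
    linarith
  have hBn : ‖B⁻¹‖ ≤ ‖A⁻¹‖ / (1 - Δ₂ * ‖A⁻¹‖) := by
    calc ‖B⁻¹‖ ≤ ‖(↑u⁻¹ : Matrix (Fin n) (Fin n) ℝ)‖ * ‖A⁻¹‖ := by
          rw [hBinv]; exact norm_mul_le _ _
    _ ≤ (1 - ‖A⁻¹ * (A - B)‖)⁻¹ * ‖A⁻¹‖ :=
          mul_le_mul_of_nonneg_right huinv hAn.le
    _ ≤ (1 - Δ₂ * ‖A⁻¹‖)⁻¹ * ‖A⁻¹‖ := by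
          refine mul_le_mul_of_nonneg_right ?_ hAn.le
          exact inv_anti₀ h1t hstep
    _ = ‖A⁻¹‖ / (1 - Δ₂ * ‖A⁻¹‖) := by rw [div_eq_mul_inv, mul_comm]
  have key : A⁻¹ - B⁻¹ = A⁻¹ * (B - A) * B⁻¹ := by
    rw [mul_sub, sub_mul, mul_assoc, hBmul, mul_one, hAmul', one_mul]
  calc ‖A⁻¹ - B⁻¹‖ = ‖A⁻¹ * (B - A) * B⁻¹‖ := by rw [key]
    _ ≤ ‖A⁻¹ * (B - A)‖ * ‖B⁻¹‖ := norm_mul_le _ _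
    _ ≤ ‖A⁻¹‖ * ‖B - A‖ * ‖B⁻¹‖ :=
        mul_le_mul_of_nonneg_right (norm_mul_le _ _) (norm_nonneg _)
    _ ≤ ‖A⁻¹‖ * Δ₂ * (‖A⁻¹‖ / (1 - Δ₂ * ‖A⁻¹‖)) := by
        refine mul_le_mul ?_ hBn (norm_nonneg _) (by positivity)
        rw [norm_sub_rev]
        exact mul_le_mul_of_nonneg_left hE hAn.le
    _ = ‖A⁻¹‖ ^ 2 * Δ₂ / (1 - Δ₂ * ‖A⁻¹‖) := by ring
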